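/- Let S be a random m×n real matrix, ε, δ ∈ (0,1), and p ≥ 1 an integer. If S has the (ε,δ,p)-JL moment property, then for any positive integers a and b, the random matrix M = I_a ⊗ S ⊗ I_b (Kronecker product with identity matrices) also has the (ε,δ,p)-JL moment property: for every unit vector y ∈ ℝ^{a·n·b}, E|‖My‖₂² − 1|^p < ε^p·δ and E‖My‖₂² = 1. -/

import Mathlib

open MeasureTheory ProbabilityTheory Matrix Kronecker

/-- The squared Euclidean norm of a finitely-indexed real vector. -/
noncomputable def sqNorm {ι : Type*} [Fintype ι] (v : ι → ℝ) : ℝ := ∑ i, v i ^ 2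

/-- A random matrix `S` has the `(ε,δ,p)`-JL moment property if for every unit vector `x`,
`E|‖Sx‖₂² − 1|^p < ε^p·δ` and `E‖Sx‖₂² = 1`. -/
def HasJLMoment {Ω : Type*} [MeasurableSpace Ω] (μ : Measure Ω)
    {ι κ : Type*} [Fintype ι] [Fintype κ] (S : Ω → Matrix ι κ ℝ) (ε δ : ℝ) (p : ℕ) : Prop :=
  ∀ x : κ → ℝ, sqNorm x = 1 →
    (∫ ω, |sqNorm (S ω *ᵥ x) - 1| ^ p ∂μ) < ε ^ p * δ ∧
    (∫ ω, sqNorm (S ω *ᵥ x) ∂μ) = 1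

lemma sqNorm_nonneg {ι : Type*} [Fintype ι] (v : ι → ℝ) : 0 ≤ sqNorm v :=
  Finset.sum_nonneg fun _ _ => sq_nonneg _

lemma sqNorm_smul {ι : Type*} [Fintype ι] (t : ℝ) (v : ι → ℝ) :
    sqNorm (t • v) = t ^ 2 * sqNorm v := by
  simp [sqNorm, Finset.mul_sum, mul_pow]

lemma sqNorm_eq_zero {ι : Type*} [Fintype ι] {v : ι → ℝ} (h : sqNorm v = 0) : v = 0 := by
  funext i
  have := (Finset.sum_eq_zero_iff_of_nonneg (fun i _ => sq_nonneg (v i))).1 h i (Finset.mem_univ i)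
  exact pow_eq_zero_iff (by norm_num) |>.1 this

lemma jl_decomp {m n a b : ℕ} (S : Matrix (Fin m) (Fin n) ℝ) (y : (Fin a × Fin n) × Fin b → ℝ) :
    sqNorm ((((1 : Matrix (Fin a) (Fin a) ℝ) ⊗ₖ S) ⊗ₖ (1 : Matrix (Fin b) (Fin b) ℝ)) *ᵥ y)
      = ∑ q : Fin a × Fin b, sqNorm (S *ᵥ fun c => y ((q.1, c), q.2)) := by
  have hentry : ∀ (i : Fin a) (r : Fin m) (j : Fin b),
      ((((1 : Matrix (Fin a) (Fin a) ℝ) ⊗ₖ S) ⊗ₖ (1 : Matrix (Fin b) (Fin b) ℝ)) *ᵥ y) ((i, r), j)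
        = (S *ᵥ fun c => y ((i, c), j)) r := by
    intro i r j
    simp [mulVec, dotProduct, Fintype.sum_prod_type, kroneckerMap_apply, one_apply,
      ite_mul, mul_ite, mul_zero, zero_mul, Finset.sum_ite_eq, Finset.sum_ite_eq']
  simp only [sqNorm, Fintype.sum_prod_type]
  refine Finset.sum_congr rfl fun i _ => ?_
  rw [Finset.sum_comm]
  refine Finset.sum_congr rfl fun j _ => Finset.sum_congr rfl fun r _ => ?_
  rw [hentry]

lemma jl_pow_add_le (p : ℕ) {s t : ℝ} (hs : 0 ≤ s) (ht : 0 ≤ t) :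
    (s + t) ^ p ≤ 2 ^ p * (s ^ p + t ^ p) := by
  have h1 : s + t ≤ 2 * max s t := by
    rcases max_cases s t with ⟨h, h'⟩ | ⟨h, h'⟩ <;> rw [h] <;> linarith
  calc (s + t) ^ p ≤ (2 * max s t) ^ p := pow_le_pow_left₀ (by positivity) h1 p
    _ = 2 ^ p * (max s t) ^ p := mul_pow 2 _ p
    _ ≤ 2 ^ p * (s ^ p + t ^ p) := by
        gcongr
        rcases max_cases s t with ⟨h, _⟩ | ⟨h, _⟩ <;> rw [h] <;>
          nlinarith [pow_nonneg hs p, pow_nonneg ht p]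

lemma jl_jensen {ι : Type*} [Fintype ι] (p : ℕ) (w t : ι → ℝ) (hw : ∀ i, 0 ≤ w i)
    (hw1 : ∑ i, w i = 1) :
    |∑ i, w i * t i| ^ p ≤ ∑ i, w i * |t i| ^ p := by
  calc |∑ i, w i * t i| ^ p ≤ (∑ i, w i * |t i|) ^ p := by
        refine pow_le_pow_left₀ (abs_nonneg _) ?_ p
        refine (Finset.abs_sum_le_sum_abs _ _).trans ?_
        refine le_of_eq (Finset.sum_congr rfl fun i _ => ?_)
        rw [abs_mul, abs_of_nonneg (hw i)]
    _ ≤ ∑ i, w i * |t i| ^ p :=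
        Real.pow_arith_mean_le_arith_mean_pow _ _ _ (fun i _ => hw i) hw1
          (fun i _ => abs_nonneg _) p


/-- If a random `m×n` matrix `S` has the `(ε,δ,p)`-JL moment property, then for
any positive integers `a, b`, the random matrix `M = I_a ⊗ S ⊗ I_b` also has the
`(ε,δ,p)`-JL moment property. -/
theorem jlMoment_kronecker_id
    {Ω : Type*} [MeasurableSpace Ω] (μ : Measure Ω) [IsProbabilityMeasure μ]
    {m n : ℕ} (S : Ω → Matrix (Fin m) (Fin n) ℝ) (ε δ : ℝ)
    (hε : ε ∈ Set.Ioo (0 : ℝ) 1) (hδ : δ ∈ Set.Ioo (0 : ℝ) 1)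
    (p : ℕ) (hp : 1 ≤ p) (h : HasJLMoment μ S ε δ p)
    (a b : ℕ) (ha : 0 < a) (hb : 0 < b) :
    HasJLMoment μ
      (fun ω => ((1 : Matrix (Fin a) (Fin a) ℝ) ⊗ₖ S ω) ⊗ₖ (1 : Matrix (Fin b) (Fin b) ℝ))
      ε δ p := by
  intro y hy
  have hεδ : (0:ℝ) < ε ^ p * δ := mul_pos (pow_pos hε.1 p) hδ.1
  set x : Fin a × Fin b → Fin n → ℝ := fun q c => y ((q.1, c), q.2) with hxdef
  set w : Fin a × Fin b → ℝ := fun q => sqNorm (x q) with hwdef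
  have hw0 : ∀ q, 0 ≤ w q := fun q => sqNorm_nonneg _
  set u : Fin a × Fin b → Fin n → ℝ := fun q => (Real.sqrt (w q))⁻¹ • x q with hudef
  set f : Fin a × Fin b → Ω → ℝ := fun q ω => sqNorm (S ω *ᵥ u q) with hfdef
  have hf0 : ∀ q ω, 0 ≤ f q ω := fun q ω => sqNorm_nonneg _
  -- zero-weight blocks vanish
  have hxz : ∀ q, w q = 0 → x q = 0 := fun q hq => sqNorm_eq_zero hq
  have hfz : ∀ q, w q = 0 → f q = fun _ => 0 := by
    intro q hq
    funext ω
    simp [hfdef, hudef, hxz q hq, sqNorm]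
  -- scaling
  have hscale : ∀ q ω, sqNorm (S ω *ᵥ x q) = w q * f q ω := by
    intro q ω
    rcases eq_or_lt_of_le (hw0 q) with hq | hq
    · rw [← hq, zero_mul]
      have : x q = 0 := hxz q hq.symm
      simp [this, sqNorm]
    · have hs : Real.sqrt (w q) ≠ 0 := ne_of_gt (Real.sqrt_pos.2 hq)
      have hx : x q = Real.sqrt (w q) • u q := by
        show x q = Real.sqrt (w q) • ((Real.sqrt (w q))⁻¹ • x q)
        rw [smul_smul, mul_inv_cancel₀ hs, one_smul]
      rw [hx, mulVec_smul, sqNorm_smul, Real.sq_sqrt (hw0 q)]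
  have hunit : ∀ q, w q ≠ 0 → sqNorm (u q) = 1 := by
    intro q hq
    show sqNorm ((Real.sqrt (w q))⁻¹ • x q) = 1
    rw [sqNorm_smul]
    show (Real.sqrt (w q))⁻¹ ^ 2 * w q = 1
    rw [inv_pow, Real.sq_sqrt (hw0 q), inv_mul_cancel₀ hq]
  -- decomposition
  have hdec : ∀ ω, sqNorm ((((1 : Matrix (Fin a) (Fin a) ℝ) ⊗ₖ S ω) ⊗ₖ
      (1 : Matrix (Fin b) (Fin b) ℝ)) *ᵥ y) = ∑ q, w q * f q ω := by
    intro ω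
    rw [jl_decomp]
    exact Finset.sum_congr rfl fun q _ => hscale q ω
  -- total weight is 1
  have hsum : ∑ q, w q = 1 := by
    rw [← hy]
    simp only [sqNorm, hwdef, hxdef, Fintype.sum_prod_type]
    refine Finset.sum_congr rfl fun i _ => ?_
    rw [Finset.sum_comm]
  -- hypothesis applied to each positive block
  have hmom := fun q (hq : w q ≠ 0) => h (u q) (hunit q hq)
  have hfint : ∀ q, w q ≠ 0 → Integrable (f q) μ := by
    intro q hq
    by_contra hni
    have := (hmom q hq).2
    rw [integral_undef hni] at this
    norm_num at this
  have hfaesm : ∀ q, AEStronglyMeasurable (f q) μ := by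
    intro q
    by_cases hq : w q = 0
    · rw [hfz q hq]; exact aestronglyMeasurable_const
    · exact (hfint q hq).aestronglyMeasurable
  constructor
  · -- moment bound
    by_cases hG : Integrable
        (fun ω => |sqNorm ((((1 : Matrix (Fin a) (Fin a) ℝ) ⊗ₖ S ω) ⊗ₖ
          (1 : Matrix (Fin b) (Fin b) ℝ)) *ᵥ y) - 1| ^ p) μ
    · -- the integrable case
      set F : Ω → ℝ := fun ω => ∑ q, w q * f q ω with hFdef
      have hF0 : ∀ ω, 0 ≤ F ω :=
        fun ω => Finset.sum_nonneg fun q _ => mul_nonneg (hw0 q) (hf0 q ω)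
      have hGF : ∀ ω, |sqNorm ((((1 : Matrix (Fin a) (Fin a) ℝ) ⊗ₖ S ω) ⊗ₖ
          (1 : Matrix (Fin b) (Fin b) ℝ)) *ᵥ y) - 1| ^ p = |F ω - 1| ^ p := by
        intro ω; rw [hdec ω]
      have hFaesm : AEStronglyMeasurable F μ :=
        Finset.aestronglyMeasurable_fun_sum _ fun q _ => (hfaesm q).const_mul _
      have hG' : Integrable (fun ω => |F ω - 1| ^ p) μ := by
        refine hG.congr ?_
        exact Filter.Eventually.of_forall fun ω => (hGF ω)
      -- F^p is integrable
      have hFp : Integrable (fun ω => F ω ^ p) μ := by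
        refine Integrable.mono' ((hG'.add (integrable_const 1)).const_mul (2 ^ p)) (hFaesm.pow _) ?_
        refine Filter.Eventually.of_forall fun ω => ?_
        rw [Real.norm_eq_abs, abs_of_nonneg (pow_nonneg (hF0 ω) p)]
        calc F ω ^ p ≤ (|F ω - 1| + 1) ^ p := by
              refine pow_le_pow_left₀ (hF0 ω) ?_ p
              have := abs_sub_abs_le_abs_sub (F ω) 1
              have h1 : |F ω| = F ω := abs_of_nonneg (hF0 ω)
              simp only [abs_one] at this
              linarith
          _ ≤ 2 ^ p * (|F ω - 1| ^ p + 1 ^ p) := jl_pow_add_le p (abs_nonneg _) zero_le_one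
          _ = 2 ^ p * (|F ω - 1| ^ p + 1) := by rw [one_pow]
      -- each |f q - 1|^p is integrable when w q ≠ 0
      have hZint : ∀ q, w q ≠ 0 → Integrable (fun ω => |f q ω - 1| ^ p) μ := by
        intro q hq
        have hq' : 0 < w q := lt_of_le_of_ne (hw0 q) (Ne.symm hq)
        have hfqp : Integrable (fun ω => f q ω ^ p) μ := by
          refine Integrable.mono' (hFp.const_mul ((w q) ^ p)⁻¹)
            ((hfaesm q).pow _) ?_
          refine Filter.Eventually.of_forall fun ω => ?_
          rw [Real.norm_eq_abs, abs_of_nonneg (pow_nonneg (hf0 q ω) p)]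
          have hle : w q * f q ω ≤ F ω := by
            refine Finset.single_le_sum (f := fun q => w q * f q ω)
              (fun r _ => mul_nonneg (hw0 r) (hf0 r ω)) (Finset.mem_univ q)
          have : f q ω ≤ F ω / w q := (le_div_iff₀ hq').2 (by linarith [hle])
          calc f q ω ^ p ≤ (F ω / w q) ^ p :=
                pow_le_pow_left₀ (hf0 q ω) this p
            _ = ((w q) ^ p)⁻¹ * F ω ^ p := by
                rw [div_pow]; ring
        refine Integrable.mono' ((hfqp.add (integrable_const 1)).const_mul (2 ^ p))
          ((continuous_abs.comp_aestronglyMeasurable ((hfaesm q).sub aestronglyMeasurable_const)).pow _) ?_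
        refine Filter.Eventually.of_forall fun ω => ?_
        rw [Real.norm_eq_abs, abs_of_nonneg (pow_nonneg (abs_nonneg _) p)]
        calc |f q ω - 1| ^ p ≤ (f q ω + 1) ^ p := by
              refine pow_le_pow_left₀ (abs_nonneg _) ?_ p
              rw [abs_sub_le_iff]
              constructor <;> nlinarith [hf0 q ω]
          _ ≤ 2 ^ p * (f q ω ^ p + 1 ^ p) := jl_pow_add_le p (hf0 q ω) zero_le_one
          _ = 2 ^ p * (f q ω ^ p + 1) := by rw [one_pow]
      -- the bounding sum function, integrable
      have hZint' : ∀ q, Integrable (fun ω => w q * |f q ω - 1| ^ p) μ := by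
        intro q
        by_cases hq : w q = 0
        · simp [hq]
        · exact (hZint q hq).const_mul _
      have hbound : Integrable (fun ω => ∑ q, w q * |f q ω - 1| ^ p) μ :=
        integrable_finset_sum _ fun q _ => hZint' q
      -- pointwise Jensen
      have hpt : ∀ ω, |F ω - 1| ^ p ≤ ∑ q, w q * |f q ω - 1| ^ p := by
        intro ω
        have : F ω - 1 = ∑ q, w q * (f q ω - 1) := by
          rw [hFdef]
          simp only [mul_sub, Finset.sum_sub_distrib, mul_one, hsum]
        rw [this]
        exact jl_jensen p w (fun q => f q ω - 1) hw0 hsum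
      calc (∫ ω, |sqNorm ((((1 : Matrix (Fin a) (Fin a) ℝ) ⊗ₖ S ω) ⊗ₖ
              (1 : Matrix (Fin b) (Fin b) ℝ)) *ᵥ y) - 1| ^ p ∂μ)
          = ∫ ω, |F ω - 1| ^ p ∂μ := by
            refine integral_congr_ae (Filter.Eventually.of_forall fun ω => hGF ω)
        _ ≤ ∫ ω, ∑ q, w q * |f q ω - 1| ^ p ∂μ :=
            integral_mono hG' hbound hpt
        _ = ∑ q, w q * ∫ ω, |f q ω - 1| ^ p ∂μ := by
            rw [integral_finset_sum _ fun q _ => hZint' q]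
            exact Finset.sum_congr rfl fun q _ => integral_const_mul _ _
        _ < ε ^ p * δ := by
            set T := Finset.univ.filter (fun q : Fin a × Fin b => w q ≠ 0) with hT
            have hTsum : ∑ q ∈ T, w q = 1 := by
              rw [← hsum]
              exact Finset.sum_filter_ne_zero _
            have hTne : T.Nonempty := by
              by_contra hne
              rw [Finset.not_nonempty_iff_eq_empty] at hne
              rw [hne, Finset.sum_empty] at hTsum
              norm_num at hTsum
            have h1 : ∑ q, w q * ∫ ω, |f q ω - 1| ^ p ∂μ
                = ∑ q ∈ T, w q * ∫ ω, |f q ω - 1| ^ p ∂μ := by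
              refine (Finset.sum_filter_of_ne fun q _ hne => ?_).symm
              intro hq
              exact hne (by rw [hq, zero_mul])
            rw [h1]
            calc ∑ q ∈ T, w q * ∫ ω, |f q ω - 1| ^ p ∂μ
                < ∑ q ∈ T, w q * (ε ^ p * δ) := by
                  refine Finset.sum_lt_sum_of_nonempty hTne fun q hq => ?_
                  have hq' : w q ≠ 0 := (Finset.mem_filter.1 hq).2
                  exact mul_lt_mul_of_pos_left ((hmom q hq').1)
                    (lt_of_le_of_ne (hw0 q) (Ne.symm hq'))
              _ = ε ^ p * δ := by rw [← Finset.sum_mul, hTsum, one_mul]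
    · rw [integral_undef hG]
      exact hεδ
  · -- expectation
    have hint : ∀ q, Integrable (fun ω => w q * f q ω) μ := by
      intro q
      by_cases hq : w q = 0
      · simp [hq]
      · exact (hfint q hq).const_mul _
    calc (∫ ω, sqNorm ((((1 : Matrix (Fin a) (Fin a) ℝ) ⊗ₖ S ω) ⊗ₖ
            (1 : Matrix (Fin b) (Fin b) ℝ)) *ᵥ y) ∂μ)
        = ∫ ω, ∑ q, w q * f q ω ∂μ :=
          integral_congr_ae (Filter.Eventually.of_forall fun ω => hdec ω)
      _ = ∑ q, w q * ∫ ω, f q ω ∂μ := by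
          rw [integral_finset_sum _ fun q _ => hint q]
          exact Finset.sum_congr rfl fun q _ => integral_const_mul _ _
      _ = ∑ q, w q := by
          refine Finset.sum_congr rfl fun q _ => ?_
          by_cases hq : w q = 0
          · simp [hq]
          · rw [(hmom q hq).2, mul_one]
      _ = 1 := hsum
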